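/- Let θ : ℝ → (0,∞) be continuously differentiable with θ(x) ≤ M_θ for all x and with L = sup_x |(1/θ)′(x)| < ∞. Then for every ε > 0 and all 0 ≤ ξ ≤ η one has | exp( −(1/ε) ∫_ξ^η dσ/θ(σ) ) − exp( −(η−ξ)/(ε θ(η)) ) | ≤ (L (η−ξ)²/(2ε)) · exp( −(η−ξ)/(M_θ ε) ). -/

import Mathlib

open Real MeasureTheory intervalIntegral

private lemma exp_neg_sub_le' {a b c : ℝ} (hc : c ≤ a) (hab : a ≤ b) :
    Real.exp (-a) - Real.exp (-b) ≤ (b - a) * Real.exp (-c) := by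
  have h1 : Real.exp (-b) = Real.exp (-a) * Real.exp (-(b - a)) := by
    rw [← Real.exp_add]; ring_nf
  have h2 : 1 - Real.exp (-(b - a)) ≤ b - a := by
    have := Real.add_one_le_exp (-(b - a)); linarith
  have h4 : Real.exp (-(b - a)) ≤ 1 := Real.exp_le_one_iff.2 (by linarith)
  have h3 : Real.exp (-a) - Real.exp (-b) = Real.exp (-a) * (1 - Real.exp (-(b - a))) := by
    rw [h1]; ring
  rw [h3]
  calc Real.exp (-a) * (1 - Real.exp (-(b - a)))
      ≤ Real.exp (-c) * (b - a) :=
        mul_le_mul (Real.exp_le_exp.2 (by linarith)) h2 (by linarith) (Real.exp_pos _).le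
    _ = (b - a) * Real.exp (-c) := mul_comm _ _

private lemma abs_exp_neg_sub {a b c : ℝ} (ha : c ≤ a) (hb : c ≤ b) :
    |Real.exp (-a) - Real.exp (-b)| ≤ |a - b| * Real.exp (-c) := by
  rcases le_total a b with h | h
  · rw [abs_of_nonneg (sub_nonneg.2 (Real.exp_le_exp.2 (by linarith))),
      abs_sub_comm, abs_of_nonneg (by linarith)]
    exact exp_neg_sub_le' ha h
  · rw [abs_sub_comm, abs_of_nonneg (sub_nonneg.2 (Real.exp_le_exp.2 (by linarith))),
      abs_of_nonneg (by linarith)]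
    exact exp_neg_sub_le' hb h

theorem frozen_relaxation_kernel_estimate
    (θ : ℝ → ℝ) (hθC1 : ContDiff ℝ 1 θ) (hθpos : ∀ x, 0 < θ x)
    (Mθ : ℝ) (hMθ : ∀ x, θ x ≤ Mθ)
    (L : ℝ) (hL : ∀ x, |deriv (fun y => 1 / θ y) x| ≤ L)
    (ε : ℝ) (hε : 0 < ε) (ξ η : ℝ) (hξ : 0 ≤ ξ) (hξη : ξ ≤ η) :
    |Real.exp (-(1 / ε) * ∫ σ in ξ..η, 1 / θ σ) -
        Real.exp (-(η - ξ) / (ε * θ η))| ≤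
      L * (η - ξ) ^ 2 / (2 * ε) * Real.exp (-(η - ξ) / (Mθ * ε)) := by
  have hMpos : 0 < Mθ := lt_of_lt_of_le (hθpos 0) (hMθ 0)
  have hθcont : Continuous θ := hθC1.continuous
  have hfcont : Continuous (fun y => 1 / θ y) :=
    continuous_const.div hθcont (fun x => (hθpos x).ne')
  have hfint : IntervalIntegrable (fun y => 1 / θ y) volume ξ η :=
    hfcont.intervalIntegrable ξ η
  have hdiff : Differentiable ℝ (fun y => 1 / θ y) := fun x =>
    (differentiableAt_const (1 : ℝ)).div ((hθC1.differentiable one_ne_zero) x) (hθpos x).ne'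
  -- Lipschitz bound
  have hlip : ∀ σ, |1 / θ σ - 1 / θ η| ≤ L * |σ - η| := by
    intro σ
    have := Convex.norm_image_sub_le_of_norm_deriv_le (f := fun y => 1 / θ y)
      (fun x _ => hdiff x)
      (fun x _ => (by simpa [Real.norm_eq_abs] using hL x))
      convex_univ (Set.mem_univ η) (Set.mem_univ σ)
    simpa [Real.norm_eq_abs] using this
  have hLnn : 0 ≤ L := le_trans (abs_nonneg _) (hL 0)
  -- integral of the difference
  set a : ℝ := ∫ σ in ξ..η, 1 / θ σ with ha
  have hconstint : ∫ _σ in ξ..η, (1 : ℝ) / θ η = (η - ξ) * (1 / θ η) := by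
    simp [smul_eq_mul]
  have hdiffint : |a - (η - ξ) / θ η| ≤ L * (η - ξ) ^ 2 / 2 := by
    have h1 : a - (η - ξ) / θ η = ∫ σ in ξ..η, (1 / θ σ - 1 / θ η) := by
      rw [intervalIntegral.integral_sub hfint (intervalIntegrable_const), hconstint]
      ring
    rw [h1]
    have hbound : ∀ σ ∈ Set.uIcc ξ η, ‖(1 : ℝ) / θ σ - 1 / θ η‖ ≤ L * (η - σ) := by
      intro σ hσ
      rw [Set.uIcc_of_le hξη] at hσ
      have h2 := hlip σ
      have h2' : |σ - η| = η - σ := by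
        rw [abs_sub_comm]; exact abs_of_nonneg (by linarith [hσ.2])
      rw [h2'] at h2
      simpa [Real.norm_eq_abs] using h2
    have h3 := intervalIntegral.norm_integral_le_integral_norm (μ := volume) (f := fun σ => 1 / θ σ - 1 / θ η) hξη
    have h4 : ∫ σ in ξ..η, ‖(1 : ℝ) / θ σ - 1 / θ η‖ ≤ ∫ σ in ξ..η, L * (η - σ) := by
      apply intervalIntegral.integral_mono_on hξη
      · exact (hfcont.sub continuous_const).norm.intervalIntegrable ξ η
      · exact (Continuous.intervalIntegrable (by continuity) ξ η)
      · intro σ hσ; exact hbound σ (by rw [Set.uIcc_of_le hξη]; exact hσ)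
    have h5 : ∫ σ in ξ..η, L * (η - σ) = L * (η - ξ) ^ 2 / 2 := by
      rw [intervalIntegral.integral_const_mul]
      have : ∫ σ in ξ..η, (η - σ) = (η - ξ) ^ 2 / 2 := by
        rw [intervalIntegral.integral_sub (intervalIntegrable_const)
          (intervalIntegral.intervalIntegrable_id), intervalIntegral.integral_const,
          integral_id]
        simp [smul_eq_mul]; ring
      rw [this]; ring
    calc |∫ σ in ξ..η, (1 / θ σ - 1 / θ η)| ≤ _ := by
          simpa [Real.norm_eq_abs] using h3
      _ ≤ L * (η - ξ) ^ 2 / 2 := h4.trans_eq h5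
  -- lower bounds for the exponents
  set c : ℝ := (η - ξ) / (Mθ * ε) with hc
  set A : ℝ := (1 / ε) * a with hA
  set B : ℝ := (η - ξ) / (ε * θ η) with hB
  have hθη := hθpos η
  have haLB : (η - ξ) / Mθ ≤ a := by
    have h6 : ∫ _σ in ξ..η, (1 : ℝ) / Mθ ≤ a := by
      apply intervalIntegral.integral_mono_on hξη (intervalIntegrable_const) hfint
      intro σ _
      exact one_div_le_one_div_of_le (hθpos σ) (hMθ σ)
    calc (η - ξ) / Mθ = ∫ _σ in ξ..η, (1 : ℝ) / Mθ := by
          rw [intervalIntegral.integral_const, smul_eq_mul]; ring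
      _ ≤ a := h6
  have hcA : c ≤ A := by
    rw [hc, hA]
    have h7 : (η - ξ) / (Mθ * ε) = (η - ξ) / Mθ * (1 / ε) := by
      field_simp
    rw [h7, mul_comm ((η - ξ) / Mθ) (1 / ε)]
    exact mul_le_mul_of_nonneg_left haLB (by positivity)
  have hcB : c ≤ B := by
    rw [hc, hB]
    rcases eq_or_lt_of_le hξη with h | h
    · simp [← h]
    · apply div_le_div_of_nonneg_left (by linarith) (by positivity)
      calc ε * θ η ≤ ε * Mθ := mul_le_mul_of_nonneg_left (hMθ η) hε.le
        _ = Mθ * ε := mul_comm _ _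
  have hABdiff : |A - B| ≤ L * (η - ξ) ^ 2 / (2 * ε) := by
    have : A - B = (1 / ε) * (a - (η - ξ) / θ η) := by
      rw [hA, hB]; field_simp
    rw [this, abs_mul, abs_of_nonneg (by positivity)]
    calc 1 / ε * |a - (η - ξ) / θ η| ≤ 1 / ε * (L * (η - ξ) ^ 2 / 2) :=
          mul_le_mul_of_nonneg_left hdiffint (by positivity)
      _ = L * (η - ξ) ^ 2 / (2 * ε) := by ring
  have hmain := abs_exp_neg_sub hcA hcB
  have hfinal : |A - B| * Real.exp (-c) ≤ L * (η - ξ) ^ 2 / (2 * ε) * Real.exp (-c) :=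
    mul_le_mul_of_nonneg_right hABdiff (Real.exp_pos _).le
  have heq1 : -(1 / ε) * a = -A := by rw [hA]; ring
  have heq2 : -(η - ξ) / (ε * θ η) = -B := by rw [hB]; ring
  rw [ha] at heq1
  calc |Real.exp (-(1 / ε) * ∫ σ in ξ..η, 1 / θ σ) - Real.exp (-(η - ξ) / (ε * θ η))|
      = |Real.exp (-A) - Real.exp (-B)| := by rw [heq1, heq2]
    _ ≤ |A - B| * Real.exp (-c) := hmain
    _ ≤ L * (η - ξ) ^ 2 / (2 * ε) * Real.exp (-c) := hfinal
    _ = L * (η - ξ) ^ 2 / (2 * ε) * Real.exp (-(η - ξ) / (Mθ * ε)) := by rw [hc]; ring_nf
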